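/- The curl–curl structure identity (Lemma 5.1). Let η : ℝ × ℝ³ → ℝ³ be of class C³ with Dη(t,x) (the spatial Jacobian matrix) invertible at every point of an open set, let v = ∂_t η, J = det Dη, a = adjugate(Dη), and δ the Kronecker symbol. Then at every such (t,x), for each k ∈ {1,2,3} (with summation of repeated indices over {1,2,3}): ∂_j(∂_t a^k_i) · a^j_i = [curl curl v]^k + v^r,_{s j} · ( J^{−1} [ a^s_r a^k_i − a^s_i a^k_r ] a^j_i − [ δ^s_r δ^k_i − δ^s_i δ^k_r ] δ^j_i ) + v^r,_s · ( J^{−1} [ a^s_r a^k_i − a^s_i a^k_r ] ),_j · a^j_i, where [curl curl v]^k = ∂_k(div v) − Δ v^k, all spatial derivatives are taken at fixed t, F,_j = ∂F/∂x_j and F,_{s j} = ∂²F/∂x_s∂x_j. -/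

import Mathlib

open Matrix

/-- Spatial Jacobian matrix of a map `ℝ³ → ℝ³`, entries `(Dη)^r_s = ∂η^r/∂x_s`. -/
noncomputable def sjac (η : (Fin 3 → ℝ) → (Fin 3 → ℝ)) (x : Fin 3 → ℝ) :
    Matrix (Fin 3) (Fin 3) ℝ :=
  Matrix.of fun r s => fderiv ℝ (fun y => η y r) x (Pi.single s 1)

/-- First-order spatial partial derivative `F,_j = ∂F/∂x_j`. -/
noncomputable def p1 (j : Fin 3) (f : (Fin 3 → ℝ) → ℝ) : (Fin 3 → ℝ) → ℝ :=
  fun x => fderiv ℝ f x (Pi.single j 1)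

/-- Lagrangian velocity `v = ∂ₜη`. -/
noncomputable def vel (η : ℝ → (Fin 3 → ℝ) → (Fin 3 → ℝ)) (t : ℝ) (x : Fin 3 → ℝ)
    (r : Fin 3) : ℝ :=
  deriv (fun s => η s x r) t

/-- Kronecker delta. -/
def kd (i j : Fin 3) : ℝ := if i = j then 1 else 0

/-! ### Auxiliary algebraic lemmas -/

lemma fin3_mk_two : (⟨2, by omega⟩ : Fin 3) = 2 := rfl

set_option maxHeartbeats 1000000 in
lemma adj3 (M : Matrix (Fin 3) (Fin 3) ℝ) (k i : Fin 3) :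
    M.adjugate k i = M (i+1) (k+1) * M (i+2) (k+2) - M (i+1) (k+2) * M (i+2) (k+1) := by
  fin_cases k <;> fin_cases i <;>
    simp only [Fin.mk_zero, Fin.mk_one, fin3_mk_two, Fin.reduceAdd, Matrix.adjugate_fin_three,
      Matrix.cons_val', Matrix.cons_val_zero, Matrix.cons_val_one, Matrix.head_cons,
      Matrix.empty_val', Matrix.cons_val_fin_one, Matrix.head_fin_const, Matrix.of_apply,
      Matrix.cons_val_two, Matrix.tail_cons] <;> ring

set_option maxHeartbeats 2000000 in
lemma key_alg (M B : Matrix (Fin 3) (Fin 3) ℝ) (h : M.det ≠ 0) (k i : Fin 3) :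
    B (i+1) (k+1) * M (i+2) (k+2) + M (i+1) (k+1) * B (i+2) (k+2)
      - (B (i+1) (k+2) * M (i+2) (k+1) + M (i+1) (k+2) * B (i+2) (k+1))
    = ∑ r : Fin 3, ∑ s : Fin 3, B r s *
        (M.det⁻¹ * (M.adjugate s r * M.adjugate k i - M.adjugate s i * M.adjugate k r)) := by
  have hd : M.det = M 0 0 * M 1 1 * M 2 2 - M 0 0 * M 1 2 * M 2 1 - M 0 1 * M 1 0 * M 2 2
      + M 0 1 * M 1 2 * M 2 0 + M 0 2 * M 1 0 * M 2 1 - M 0 2 * M 1 1 * M 2 0 :=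
    Matrix.det_fin_three M
  fin_cases k <;> fin_cases i <;>
    · simp only [Fin.mk_zero, Fin.mk_one, fin3_mk_two, Fin.reduceAdd, Fin.sum_univ_three,
        Matrix.adjugate_fin_three, Matrix.cons_val', Matrix.cons_val_zero, Matrix.cons_val_one,
        Matrix.head_cons, Matrix.empty_val', Matrix.cons_val_fin_one, Matrix.head_fin_const,
        Matrix.of_apply, Matrix.cons_val_two, Matrix.tail_cons]
      field_simp
      rw [hd]
      ring


lemma kd00 : kd 0 0 = 1 := rfl
lemma kd01 : kd 0 1 = 0 := rfl
lemma kd02 : kd 0 2 = 0 := rfl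
lemma kd10 : kd 1 0 = 0 := rfl
lemma kd11 : kd 1 1 = 1 := rfl
lemma kd12 : kd 1 2 = 0 := rfl
lemma kd20 : kd 2 0 = 0 := rfl
lemma kd21 : kd 2 1 = 0 := rfl
lemma kd22 : kd 2 2 = 1 := rfl

set_option maxHeartbeats 4000000 in
lemma final_alg (P : Fin 3 → Fin 3 → Fin 3 → ℝ) (b : Fin 3 → Fin 3 → ℝ)
    (χ : Fin 3 → Fin 3 → Fin 3 → Fin 3 → ℝ) (a : Matrix (Fin 3) (Fin 3) ℝ) (Jinv : ℝ)
    (k : Fin 3) :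
    (∑ i : Fin 3, ∑ j : Fin 3, (∑ r : Fin 3, ∑ s : Fin 3,
        (P j s r * (Jinv * (a s r * a k i - a s i * a k r)) + b s r * χ i j r s)) * a j i)
    = ((∑ m : Fin 3, P k m m) - ∑ m : Fin 3, P m m k)
      + (∑ r : Fin 3, ∑ s : Fin 3, ∑ j : Fin 3, ∑ i : Fin 3,
          P j s r * (Jinv * (a s r * a k i - a s i * a k r) * a j i
            - (kd s r * kd k i - kd s i * kd k r) * kd j i))
      + ∑ r : Fin 3, ∑ s : Fin 3, ∑ j : Fin 3, ∑ i : Fin 3,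
          b s r * χ i j r s * a j i := by
  fin_cases k <;>
  · simp only [Fin.sum_univ_three, Fin.mk_zero, Fin.mk_one, fin3_mk_two,
      kd00, kd01, kd02, kd10, kd11, kd12, kd20, kd21, kd22]
    ring

/-! ### Auxiliary calculus lemmas -/

section Calc

variable {E : Type*} [NormedAddCommGroup E] [NormedSpace ℝ E]

lemma fderiv_slice {f : ℝ × E → ℝ} {t : ℝ} {y : E}
    (hf : DifferentiableAt ℝ f (t, y)) (w : E) :
    fderiv ℝ (fun y' => f (t, y')) y w = fderiv ℝ f (t, y) (0, w) := by
  have h : HasFDerivAt (fun y' => f (t, y'))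
      ((fderiv ℝ f (t, y)).comp (ContinuousLinearMap.inr ℝ ℝ E)) y :=
    hf.hasFDerivAt.comp y (hasFDerivAt_prodMk_right t y)
  rw [h.fderiv]
  rfl

lemma diff_slice {f : ℝ × E → ℝ} {t : ℝ} {y : E}
    (hf : DifferentiableAt ℝ f (t, y)) :
    DifferentiableAt ℝ (fun y' => f (t, y')) y :=
  hf.comp y (hasFDerivAt_prodMk_right t y).differentiableAt

lemma hasDerivAt_slice {f : ℝ × E → ℝ} {t : ℝ} {y : E}
    (hf : DifferentiableAt ℝ f (t, y)) :
    HasDerivAt (fun s => f (s, y)) (fderiv ℝ f (t, y) (1, 0)) t := by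
  have h := (hf.hasFDerivAt.comp t (hasFDerivAt_prodMk_left t y)).hasDerivAt
  exact h

lemma contDiff_dp {f : ℝ × E → ℝ} {n m : WithTop ℕ∞} (hf : ContDiff ℝ n f)
    (hmn : m + 1 ≤ n) (w : ℝ × E) :
    ContDiff ℝ m (fun p => fderiv ℝ f p w) :=
  (hf.fderiv_right hmn).clm_apply contDiff_const

lemma second_swap {f : ℝ × E → ℝ} (hf : ContDiff ℝ 3 f) (p : ℝ × E) (v w : ℝ × E) :
    fderiv ℝ (fun q => fderiv ℝ f q v) p w = fderiv ℝ (fun q => fderiv ℝ f q w) p v := by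
  have hd : ContDiff ℝ 2 (fderiv ℝ f) := hf.fderiv_right (by norm_num)
  have hda : DifferentiableAt ℝ (fderiv ℝ f) p :=
    (hd.differentiable (by norm_num)).differentiableAt
  have h1 : fderiv ℝ (fun q => fderiv ℝ f q v) p w = fderiv ℝ (fderiv ℝ f) p w v := by
    rw [fderiv_clm_apply hda (differentiableAt_const v)]
    simp
  have h2 : fderiv ℝ (fun q => fderiv ℝ f q w) p v = fderiv ℝ (fderiv ℝ f) p v w := by
    rw [fderiv_clm_apply hda (differentiableAt_const w)]
    simp
  rw [h1, h2, (hf.contDiffAt.isSymmSndFDerivAt (by norm_num)).eq w v]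

end Calc

/-- evaluation of a time-dependent map as a function on `ℝ × ℝ³`. -/
noncomputable def comp3 (η : ℝ → (Fin 3 → ℝ) → (Fin 3 → ℝ)) (r : Fin 3) :
    ℝ × (Fin 3 → ℝ) → ℝ := fun p => η p.1 p.2 r

/-- partial derivative in the time direction. -/
noncomputable def dpt (f : ℝ × (Fin 3 → ℝ) → ℝ) : ℝ × (Fin 3 → ℝ) → ℝ :=
  fun p => fderiv ℝ f p (1, 0)

/-- partial derivative in the `s`-th space direction. -/
noncomputable def dpx (s : Fin 3) (f : ℝ × (Fin 3 → ℝ) → ℝ) : ℝ × (Fin 3 → ℝ) → ℝ :=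
  fun p => fderiv ℝ f p ((0 : ℝ), Pi.single s 1)

lemma p1_sum (j : Fin 3) (x : Fin 3 → ℝ) (u : Fin 3 → (Fin 3 → ℝ) → ℝ)
    (hu : ∀ r, DifferentiableAt ℝ (u r) x) :
    p1 j (fun y => ∑ r : Fin 3, u r y) x = ∑ r : Fin 3, p1 j (u r) x := by
  simp only [p1]
  rw [fderiv_fun_sum (fun r _ => hu r)]
  simp

lemma p1_mul (j : Fin 3) (x : Fin 3 → ℝ) {f g : (Fin 3 → ℝ) → ℝ}
    (hf : DifferentiableAt ℝ f x) (hg : DifferentiableAt ℝ g x) :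
    p1 j (fun y => f y * g y) x = p1 j f x * g x + f x * p1 j g x := by
  simp only [p1]
  rw [fderiv_fun_mul hf hg]
  simp
  ring

set_option maxHeartbeats 4000000 in
theorem curl_curl_structure (η : ℝ → (Fin 3 → ℝ) → (Fin 3 → ℝ))
    (hη : ContDiff ℝ 3 (fun p : ℝ × (Fin 3 → ℝ) => η p.1 p.2))
    (V : Set (ℝ × (Fin 3 → ℝ))) (hV : IsOpen V)
    (hinv : ∀ p ∈ V, (sjac (η p.1) p.2).det ≠ 0) :
    ∀ t : ℝ, ∀ x : Fin 3 → ℝ, (t, x) ∈ V → ∀ k : Fin 3,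
      (∑ i : Fin 3, ∑ j : Fin 3,
          p1 j (fun y => deriv (fun s => (sjac (η s) y).adjugate k i) t) x
            * (sjac (η t) x).adjugate j i)
        =
        ((∑ m : Fin 3, p1 k (p1 m (fun y => vel η t y m)) x)
            - ∑ m : Fin 3, p1 m (p1 m (fun y => vel η t y k)) x)
        + (∑ r : Fin 3, ∑ s : Fin 3, ∑ j : Fin 3, ∑ i : Fin 3,
            p1 j (p1 s (fun y => vel η t y r)) x *
              (((sjac (η t) x).det)⁻¹
                  * ((sjac (η t) x).adjugate s r * (sjac (η t) x).adjugate k i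
                      - (sjac (η t) x).adjugate s i * (sjac (η t) x).adjugate k r)
                  * (sjac (η t) x).adjugate j i
                - (kd s r * kd k i - kd s i * kd k r) * kd j i))
        + ∑ r : Fin 3, ∑ s : Fin 3, ∑ j : Fin 3, ∑ i : Fin 3,
            p1 s (fun y => vel η t y r) x *
              p1 j (fun y => ((sjac (η t) y).det)⁻¹
                  * ((sjac (η t) y).adjugate s r * (sjac (η t) y).adjugate k i
                      - (sjac (η t) y).adjugate s i * (sjac (η t) y).adjugate k r)) x *
              (sjac (η t) x).adjugate j i := by
  intro t x hmem k
  have hFr : ∀ r : Fin 3, ContDiff ℝ 3 (comp3 η r) := fun r => contDiff_pi.mp hη r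
  have hQ : ∀ r : Fin 3, ContDiff ℝ 2 (dpt (comp3 η r)) :=
    fun r => contDiff_dp (hFr r) (by norm_num) _
  have hR : ∀ r s : Fin 3, ContDiff ℝ 2 (dpx s (comp3 η r)) :=
    fun r s => contDiff_dp (hFr r) (by norm_num) _
  have hS : ∀ r s : Fin 3, ContDiff ℝ 1 (dpx s (dpt (comp3 η r))) :=
    fun r s => contDiff_dp (hQ r) (by norm_num) _
  have hsjac : ∀ (τ : ℝ) (y : Fin 3 → ℝ) (r s : Fin 3),
      sjac (η τ) y r s = dpx s (comp3 η r) (τ, y) := by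
    intro τ y r s
    simp only [sjac, Matrix.of_apply]
    exact fderiv_slice ((hFr r).differentiable (by norm_num) (τ, y)) (Pi.single s 1)
  have hvel : ∀ (τ : ℝ) (y : Fin 3 → ℝ) (r : Fin 3),
      vel η τ y r = dpt (comp3 η r) (τ, y) := by
    intro τ y r
    exact (hasDerivAt_slice ((hFr r).differentiable (by norm_num) (τ, y))).deriv
  have hB : ∀ (y : Fin 3 → ℝ) (r s : Fin 3),
      p1 s (fun y' => vel η t y' r) y = dpx s (dpt (comp3 η r)) (t, y) := by
    intro y r s
    have he : (fun y' => vel η t y' r) = (fun y' => dpt (comp3 η r) (t, y')) :=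
      funext fun y' => hvel t y' r
    show fderiv ℝ (fun y' => vel η t y' r) y (Pi.single s 1) = _
    rw [he]
    exact fderiv_slice ((hQ r).differentiable (by norm_num) (t, y)) (Pi.single s 1)
  have hmix : ∀ (y : Fin 3 → ℝ) (r s : Fin 3),
      HasDerivAt (fun τ => sjac (η τ) y r s) (dpx s (dpt (comp3 η r)) (t, y)) t := by
    intro y r s
    have he : (fun τ => sjac (η τ) y r s) = fun τ => dpx s (comp3 η r) (τ, y) :=
      funext fun τ => hsjac τ y r s
    rw [he]
    have h2 := hasDerivAt_slice ((hR r s).differentiable (by norm_num) (t, y))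
    have h3 : dpx s (dpt (comp3 η r)) (t, y) = fderiv ℝ (dpx s (comp3 η r)) (t, y) (1, 0) :=
      second_swap (hFr r) (t, y) ((1 : ℝ), (0 : Fin 3 → ℝ)) ((0 : ℝ), Pi.single s 1)
    rw [h3]
    exact h2
  have hUopen : IsOpen {y : Fin 3 → ℝ | (t, y) ∈ V} :=
    hV.preimage (continuous_const.prodMk continuous_id)
  have hxU : x ∈ {y : Fin 3 → ℝ | (t, y) ∈ V} := hmem
  have hAdiff : ∀ r s : Fin 3, Differentiable ℝ (fun y => sjac (η t) y r s) := by
    intro r s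
    have he : (fun y => sjac (η t) y r s) = fun y => dpx s (comp3 η r) (t, y) :=
      funext fun y => hsjac t y r s
    rw [he]
    exact fun y => diff_slice ((hR r s).differentiable (by norm_num) (t, y))
  have hadjdiff : ∀ a b : Fin 3, Differentiable ℝ (fun y => (sjac (η t) y).adjugate a b) := by
    intro a b
    have he : (fun y => (sjac (η t) y).adjugate a b) = fun y =>
        sjac (η t) y (b+1) (a+1) * sjac (η t) y (b+2) (a+2)
          - sjac (η t) y (b+1) (a+2) * sjac (η t) y (b+2) (a+1) :=
      funext fun y => adj3 _ a b
    rw [he]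
    exact ((hAdiff _ _).mul (hAdiff _ _)).sub ((hAdiff _ _).mul (hAdiff _ _))
  have hdetdiff : Differentiable ℝ (fun y => (sjac (η t) y).det) := by
    have he : (fun y => (sjac (η t) y).det) = fun y =>
        sjac (η t) y 0 0 * sjac (η t) y 1 1 * sjac (η t) y 2 2
          - sjac (η t) y 0 0 * sjac (η t) y 1 2 * sjac (η t) y 2 1
          - sjac (η t) y 0 1 * sjac (η t) y 1 0 * sjac (η t) y 2 2
          + sjac (η t) y 0 1 * sjac (η t) y 1 2 * sjac (η t) y 2 0
          + sjac (η t) y 0 2 * sjac (η t) y 1 0 * sjac (η t) y 2 1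
          - sjac (η t) y 0 2 * sjac (η t) y 1 1 * sjac (η t) y 2 0 :=
      funext fun y => Matrix.det_fin_three _
    rw [he]
    exact ((((((hAdiff 0 0).mul (hAdiff 1 1)).mul (hAdiff 2 2)).sub
      (((hAdiff 0 0).mul (hAdiff 1 2)).mul (hAdiff 2 1))).sub
      (((hAdiff 0 1).mul (hAdiff 1 0)).mul (hAdiff 2 2))).add
      (((hAdiff 0 1).mul (hAdiff 1 2)).mul (hAdiff 2 0))).add
      (((hAdiff 0 2).mul (hAdiff 1 0)).mul (hAdiff 2 1)) |>.sub
      (((hAdiff 0 2).mul (hAdiff 1 1)).mul (hAdiff 2 0))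
  have hdetne : (sjac (η t) x).det ≠ 0 := hinv (t, x) hmem
  have hpsidiff : ∀ κ i r s : Fin 3, DifferentiableAt ℝ (fun y => ((sjac (η t) y).det)⁻¹ *
      ((sjac (η t) y).adjugate s r * (sjac (η t) y).adjugate κ i
        - (sjac (η t) y).adjugate s i * (sjac (η t) y).adjugate κ r)) x := by
    intro κ i r s
    exact ((hdetdiff x).inv hdetne).mul
      ((((hadjdiff s r) x).mul ((hadjdiff κ i) x)).sub (((hadjdiff s i) x).mul ((hadjdiff κ r) x)))
  have hbdiff : ∀ r s : Fin 3, Differentiable ℝ (p1 s (fun y' => vel η t y' r)) := by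
    intro r s
    have he : (p1 s (fun y' => vel η t y' r)) = fun y => dpx s (dpt (comp3 η r)) (t, y) :=
      funext fun y => hB y r s
    rw [he]
    exact fun y => diff_slice ((hS r s).differentiable (by norm_num) (t, y))
  have hform : ∀ κ i : Fin 3,
      (fun y => deriv (fun τ => (sjac (η τ) y).adjugate κ i) t) =ᶠ[nhds x]
      (fun y => ∑ r : Fin 3, ∑ s : Fin 3, p1 s (fun y' => vel η t y' r) y *
          (((sjac (η t) y).det)⁻¹ * ((sjac (η t) y).adjugate s r * (sjac (η t) y).adjugate κ i
            - (sjac (η t) y).adjugate s i * (sjac (η t) y).adjugate κ r))) := by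
    intro κ i
    filter_upwards [hUopen.mem_nhds hxU] with y hy
    have hdet : (sjac (η t) y).det ≠ 0 := hinv (t, y) hy
    have hd : HasDerivAt (fun τ => (sjac (η τ) y).adjugate κ i)
        (dpx (κ+1) (dpt (comp3 η (i+1))) (t, y) * sjac (η t) y (i+2) (κ+2)
          + sjac (η t) y (i+1) (κ+1) * dpx (κ+2) (dpt (comp3 η (i+2))) (t, y)
          - (dpx (κ+2) (dpt (comp3 η (i+1))) (t, y) * sjac (η t) y (i+2) (κ+1)
            + sjac (η t) y (i+1) (κ+2) * dpx (κ+1) (dpt (comp3 η (i+2))) (t, y))) t := by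
      have he : (fun τ => (sjac (η τ) y).adjugate κ i) = fun τ =>
          sjac (η τ) y (i+1) (κ+1) * sjac (η τ) y (i+2) (κ+2)
            - sjac (η τ) y (i+1) (κ+2) * sjac (η τ) y (i+2) (κ+1) :=
        funext fun τ => adj3 _ κ i
      rw [he]
      exact ((hmix y _ _).mul (hmix y _ _)).sub ((hmix y _ _).mul (hmix y _ _))
    rw [hd.deriv]
    have hkey := key_alg (sjac (η t) y)
      (Matrix.of fun r s => dpx s (dpt (comp3 η r)) (t, y)) hdet κ i
    simp only [Matrix.of_apply] at hkey
    rw [hkey]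
    refine Finset.sum_congr rfl fun r _ => Finset.sum_congr rfl fun s _ => ?_
    rw [hB y r s]
  have hp1 : ∀ κ i j : Fin 3,
      p1 j (fun y => deriv (fun τ => (sjac (η τ) y).adjugate κ i) t) x
        = ∑ r : Fin 3, ∑ s : Fin 3,
            (p1 j (p1 s (fun y' => vel η t y' r)) x *
              (((sjac (η t) x).det)⁻¹ * ((sjac (η t) x).adjugate s r * (sjac (η t) x).adjugate κ i
                - (sjac (η t) x).adjugate s i * (sjac (η t) x).adjugate κ r))
            + p1 s (fun y' => vel η t y' r) x *
              p1 j (fun y => ((sjac (η t) y).det)⁻¹ *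
                ((sjac (η t) y).adjugate s r * (sjac (η t) y).adjugate κ i
                  - (sjac (η t) y).adjugate s i * (sjac (η t) y).adjugate κ r)) x) := by
    intro κ i j
    have h0 : p1 j (fun y => deriv (fun τ => (sjac (η τ) y).adjugate κ i) t) x
        = p1 j (fun y => ∑ r : Fin 3, ∑ s : Fin 3, p1 s (fun y' => vel η t y' r) y *
            (((sjac (η t) y).det)⁻¹ *
              ((sjac (η t) y).adjugate s r * (sjac (η t) y).adjugate κ i
                - (sjac (η t) y).adjugate s i * (sjac (η t) y).adjugate κ r))) x := by
      simp only [p1]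
      rw [(hform κ i).fderiv_eq]
      rfl
    rw [h0]
    rw [p1_sum j x _ (fun r => DifferentiableAt.fun_sum fun s _ =>
      ((hbdiff r s x).fun_mul (hpsidiff κ i r s)))]
    refine Finset.sum_congr rfl fun r _ => ?_
    rw [p1_sum j x _ (fun s => (hbdiff r s x).fun_mul (hpsidiff κ i r s))]
    refine Finset.sum_congr rfl fun s _ => ?_
    exact p1_mul j x (hbdiff r s x) (hpsidiff κ i r s)
  simp only [hp1]
  exact final_alg (fun j s r => p1 j (p1 s (fun y => vel η t y r)) x)
    (fun s r => p1 s (fun y => vel η t y r) x)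
    (fun i j r s => p1 j (fun y => ((sjac (η t) y).det)⁻¹ *
      ((sjac (η t) y).adjugate s r * (sjac (η t) y).adjugate k i
        - (sjac (η t) y).adjugate s i * (sjac (η t) y).adjugate k r)) x)
    ((sjac (η t) x).adjugate) (((sjac (η t) x).det)⁻¹) k
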